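/- In the shuffle algebra ℚ⟨e_0,e_1⟩ with shuffle product ⧢, for every word w we have (1+e_0)^{-1} ⧢ w(e_0, e_1) = w((1+e_0)^{-1} e_0, (1+e_0)^{-1} e_1) · (1+e_0)^{-1}, as an identity in the completion ℚ⟨⟨e_0,e_1⟩⟩ (where (1+e_0)^{-1} = ∑_{n≥0} (-1)^n e_0^n). -/

import Mathlib

/-- The subword of `w` given by the positions in `S` (in increasing order). -/
def extract (w : List (Fin 2)) (S : Finset ℕ) : List (Fin 2) :=
  ((List.zip (List.range w.length) w).filter (fun q => q.1 ∈ S)).map Prod.snd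

/-- Shuffle product of noncommutative series over `ℚ`. -/
def shMul (u v : List (Fin 2) → ℚ) : List (Fin 2) → ℚ :=
  fun w => ∑ S ∈ (Finset.range w.length).powerset,
    u (extract w S) * v (extract w ((Finset.range w.length) \ S))

/-- Concatenation product of noncommutative series. -/
def convMul (u v : List (Fin 2) → ℚ) : List (Fin 2) → ℚ :=
  fun w => ∑ i ∈ Finset.range (w.length + 1), u (w.take i) * v (w.drop i)

/-- The unit series `1`. -/
def oneSeries : List (Fin 2) → ℚ := fun w => if w = [] then 1 else 0

/-- The indicator series of a word `w`. -/
def delta (w : List (Fin 2)) : List (Fin 2) → ℚ := fun v => if v = w then 1 else 0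

/-- The series `(1 + e₀)⁻¹ = ∑_{n≥0} (-1)ⁿ e₀ⁿ`. -/
def invOnePlusE0 : List (Fin 2) → ℚ :=
  fun w => if ∀ a ∈ w, a = (0 : Fin 2) then (-1 : ℚ) ^ w.length else 0

/-- The series `(1 + e₀)⁻¹ · e_a = ∑_{n≥0} (-1)ⁿ e₀ⁿ e_a` substituted for
the letter `a`. -/
def letterSub (a : Fin 2) : List (Fin 2) → ℚ :=
  fun v => if v ≠ [] ∧ v.getLast? = some a ∧ ∀ x ∈ v.dropLast, x = (0 : Fin 2)
    then (-1 : ℚ) ^ (v.length - 1) else 0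

/-- The substitution `w(e₀,e₁) ↦ w((1+e₀)⁻¹ e₀, (1+e₀)⁻¹ e₁)`
(concatenation of the substituted letters). -/
def subst (w : List (Fin 2)) : List (Fin 2) → ℚ :=
  (w.map letterSub).foldr convMul oneSeries

-- easy lemmas
lemma shMul_nil (u v : List (Fin 2) → ℚ) : shMul u v [] = u [] * v [] := by
  simp [shMul, extract]

lemma convMul_nil (u v : List (Fin 2) → ℚ) : convMul u v [] = u [] * v [] := by
  simp [convMul]

lemma convMul_cons (u v : List (Fin 2) → ℚ) (c : Fin 2) (t : List (Fin 2)) :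
    convMul u v (c :: t) = u [] * v (c :: t) + convMul (fun s => u (c :: s)) v t := by
  simp only [convMul, List.length_cons]
  rw [Finset.sum_range_succ']
  simp [add_comm]

lemma letterSub_nil (a : Fin 2) : letterSub a [] = 0 := by simp [letterSub]

lemma subst_cons (a : Fin 2) (w : List (Fin 2)) :
    subst (a :: w) = convMul (letterSub a) (subst w) := rfl

lemma subst_nil_apply (w : List (Fin 2)) : subst w [] = if w = [] then 1 else 0 := by
  cases w with
  | nil => simp [subst, oneSeries]
  | cons a w => simp [subst_cons, convMul_nil, letterSub_nil]

lemma invOnePlusE0_cons (c : Fin 2) (s : List (Fin 2)) :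
    invOnePlusE0 (c :: s) = (if c = 0 then -1 else 0) * invOnePlusE0 s := by
  simp only [invOnePlusE0, List.mem_cons, List.length_cons]
  by_cases hc : c = 0
  · subst hc
    by_cases hs : ∀ a ∈ s, a = (0 : Fin 2)
    · simp [hs, pow_succ, mul_comm]
    · simp [hs]
  · simp [hc]

lemma delta_cons (a : Fin 2) (w : List (Fin 2)) (c : Fin 2) (s : List (Fin 2)) :
    delta (a :: w) (c :: s) = (if c = a then 1 else 0) * delta w s := by
  simp only [delta, List.cons.injEq]
  by_cases hc : c = a <;> by_cases hs : s = w <;> simp [hc, hs]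

lemma delta_nil_cons (c : Fin 2) (s : List (Fin 2)) : delta [] (c :: s) = 0 := by
  simp [delta]

lemma oneSeries_cons (c : Fin 2) (s : List (Fin 2)) : oneSeries (c :: s) = 0 := by
  simp [oneSeries]

lemma letterSub_cons (a : Fin 2) (c : Fin 2) (s : List (Fin 2)) :
    letterSub a (c :: s) =
      (if c = a then 1 else 0) * oneSeries s + (if c = 0 then -1 else 0) * letterSub a s := by
  cases s with
  | nil => by_cases hc : c = a <;> simp [letterSub, oneSeries, hc]
  | cons d s' =>
    by_cases hc : c = 0
    · subst hc
      by_cases h1 : (d :: s').getLast? = some a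
      · by_cases h2 : ∀ x ∈ (d :: s').dropLast, x = (0 : Fin 2)
        · simp [letterSub, oneSeries, h1, h2, List.dropLast_cons₂, pow_succ, mul_comm]
        · simp [letterSub, oneSeries, h1, h2, List.dropLast_cons₂]
      · simp [letterSub, oneSeries, h1, List.dropLast_cons₂]
    · simp [letterSub, oneSeries, hc, List.dropLast_cons₂]

lemma shMul_smul_left (r : ℚ) (u u' v : List (Fin 2) → ℚ) (h : ∀ s, u' s = r * u s)
    (t : List (Fin 2)) : shMul u' v t = r * shMul u v t := by
  simp only [shMul, h, Finset.mul_sum, mul_assoc]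

lemma shMul_add_right (u v₁ v₂ v : List (Fin 2) → ℚ) (h : ∀ s, v s = v₁ s + v₂ s)
    (t : List (Fin 2)) : shMul u v t = shMul u v₁ t + shMul u v₂ t := by
  simp only [shMul, h, mul_add, Finset.sum_add_distrib]

lemma shMul_smul_right (r : ℚ) (u v v' : List (Fin 2) → ℚ) (h : ∀ s, v' s = r * v s)
    (t : List (Fin 2)) : shMul u v' t = r * shMul u v t := by
  simp only [shMul, h, Finset.mul_sum]
  congr 1; funext S; ring

lemma convMul_add_left (x y z : List (Fin 2) → ℚ) (u : List (Fin 2) → ℚ)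
    (h : ∀ s, u s = x s + y s) (t : List (Fin 2)) :
    convMul u z t = convMul x z t + convMul y z t := by
  simp only [convMul, h, add_mul, Finset.sum_add_distrib]

lemma convMul_smul_left (r : ℚ) (x z u : List (Fin 2) → ℚ) (h : ∀ s, u s = r * x s)
    (t : List (Fin 2)) : convMul u z t = r * convMul x z t := by
  simp only [convMul, h, Finset.mul_sum, mul_assoc]

lemma convMul_one_left (u : List (Fin 2) → ℚ) (t : List (Fin 2)) :
    convMul oneSeries u t = u t := by
  simp only [convMul]
  rw [Finset.sum_eq_single 0]
  · simp [oneSeries]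
  · intro i hi h0
    have hle : i ≤ t.length := Nat.lt_succ_iff.mp (Finset.mem_range.mp hi)
    have hne : t.take i ≠ [] := by
      intro hnil
      have hl := congrArg List.length hnil
      simp only [List.length_take, List.length_nil] at hl
      omega
    simp [oneSeries, hne]
  · intro h; simp at h

def succEmb : ℕ ↪ ℕ := ⟨Nat.succ, Nat.succ_injective⟩

@[simp] lemma succEmb_apply (x : ℕ) : succEmb x = x + 1 := rfl

lemma mem_map_succ (S : Finset ℕ) (x : ℕ) : x ∈ S.map succEmb ↔ ∃ y ∈ S, y + 1 = x := by
  simp [succEmb, Finset.mem_map]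

lemma range_succ_eq (n : ℕ) :
    Finset.range (n + 1) = insert 0 ((Finset.range n).map succEmb) := by
  ext x
  cases x with
  | zero => simp
  | succ y => simp [mem_map_succ]

lemma powerset_map (A : Finset ℕ) :
    (A.map succEmb).powerset = A.powerset.image (Finset.map succEmb) := by
  ext T
  simp only [Finset.mem_powerset, Finset.mem_image, Finset.subset_map_iff]
  constructor
  · rintro ⟨u, hu, rfl⟩; exact ⟨u, hu, rfl⟩
  · rintro ⟨u, hu, rfl⟩; exact ⟨u, hu, rfl⟩

lemma cdiff1 (n : ℕ) (S : Finset ℕ) :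
    insert 0 ((Finset.range n).map succEmb) \ (S.map succEmb) =
      insert 0 ((Finset.range n \ S).map succEmb) := by
  ext x
  cases x with
  | zero => simp [mem_map_succ]
  | succ y => simp [mem_map_succ]

lemma cdiff2 (n : ℕ) (S : Finset ℕ) :
    insert 0 ((Finset.range n).map succEmb) \ (insert 0 (S.map succEmb)) =
      (Finset.range n \ S).map succEmb := by
  ext x
  cases x with
  | zero => simp [mem_map_succ]
  | succ y => simp [mem_map_succ]

lemma zip_range_cons (c : Fin 2) (t : List (Fin 2)) :
    List.zip (List.range (c :: t).length) (c :: t) =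
      (0, c) :: (List.zip (List.range t.length) t).map (Prod.map Nat.succ id) := by
  rw [List.length_cons, List.range_succ_eq_map, List.zip_cons_cons, List.zip_map_left]

lemma extract_map_succ (c : Fin 2) (t : List (Fin 2)) (S : Finset ℕ) :
    extract (c :: t) (S.map succEmb) = extract t S := by
  simp only [extract, zip_range_cons]
  rw [List.filter_cons]
  have h0 : (decide ((0:ℕ) ∈ S.map succEmb)) = false := by
    simp [mem_map_succ]
  rw [h0]
  simp only [Bool.false_eq_true, if_false, List.filter_map, List.map_map]
  congr 1
  apply List.filter_congr
  intro q _
  simp [mem_map_succ, Function.comp]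

lemma extract_insert_zero (c : Fin 2) (t : List (Fin 2)) (S : Finset ℕ) :
    extract (c :: t) (insert 0 (S.map succEmb)) = c :: extract t S := by
  simp only [extract, zip_range_cons]
  rw [List.filter_cons]
  have h0 : (decide ((0:ℕ) ∈ insert 0 (S.map succEmb))) = true := by simp
  rw [h0]
  simp only [if_true, List.filter_map, List.map_map, List.map_cons]
  congr 2
  apply List.filter_congr
  intro q _
  simp [mem_map_succ, Function.comp]

lemma shMul_cons (u v : List (Fin 2) → ℚ) (c : Fin 2) (t : List (Fin 2)) :
    shMul u v (c :: t) =
      shMul (fun s => u (c :: s)) v t + shMul u (fun s => v (c :: s)) t := by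
  simp only [shMul, List.length_cons]
  rw [range_succ_eq, Finset.sum_powerset_insert (by simp [mem_map_succ])]
  rw [powerset_map, Finset.sum_image (fun a _ b _ h => Finset.map_injective succEmb h),
      Finset.sum_image (fun a _ b _ h => Finset.map_injective succEmb h)]
  rw [add_comm]
  congr 1
  · apply Finset.sum_congr rfl
    intro S hS
    rw [cdiff2, extract_insert_zero, extract_map_succ]
  · apply Finset.sum_congr rfl
    intro S hS
    rw [cdiff1, extract_map_succ, extract_insert_zero]

lemma main_pointwise (v w : List (Fin 2)) :
    shMul invOnePlusE0 (delta w) v = convMul (subst w) invOnePlusE0 v := by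
  induction v generalizing w with
  | nil =>
    rw [shMul_nil, convMul_nil, subst_nil_apply]
    by_cases hw : w = [] <;> simp [invOnePlusE0, delta, hw, eq_comm]
  | cons c t ih =>
    cases w with
    | nil =>
      rw [shMul_cons, convMul_cons]
      rw [shMul_smul_left (if c = 0 then -1 else 0) invOnePlusE0 _ (delta [])
        (invOnePlusE0_cons c) t]
      rw [shMul_smul_right 0 invOnePlusE0 (delta []) (fun s => delta [] (c :: s))
        (fun s => by show delta [] (c :: s) = _; rw [delta_nil_cons, zero_mul]) t]
      rw [ih []]
      have hsub : subst ([] : List (Fin 2)) = oneSeries := rfl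
      rw [hsub, convMul_one_left]
      rw [convMul_smul_left 0 oneSeries invOnePlusE0 (fun s => oneSeries (c :: s))
        (fun s => by show oneSeries (c :: s) = _; rw [oneSeries_cons, zero_mul]) t]
      rw [invOnePlusE0_cons]
      simp [oneSeries]
    | cons a w' =>
      rw [shMul_cons, convMul_cons]
      rw [shMul_smul_left (if c = 0 then -1 else 0) invOnePlusE0 _ (delta (a :: w'))
        (invOnePlusE0_cons c) t]
      rw [shMul_smul_right (if c = a then 1 else 0) invOnePlusE0 (delta w') _
        (delta_cons a w' c) t]
      rw [ih (a :: w'), ih w', subst_nil_apply]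
      have hg : ∀ s, subst (a :: w') (c :: s) =
          (if c = a then (1:ℚ) else 0) * subst w' s
          + (if c = 0 then (-1:ℚ) else 0) * subst (a :: w') s := by
        intro s
        rw [subst_cons, convMul_cons, letterSub_nil]
        rw [convMul_add_left (fun s' => (if c = a then (1:ℚ) else 0) * oneSeries s')
          (fun s' => (if c = 0 then (-1:ℚ) else 0) * letterSub a s') (subst w') _
          (letterSub_cons a c) s]
        rw [convMul_smul_left (if c = a then (1:ℚ) else 0) oneSeries (subst w') _
          (fun _ => rfl) s]
        rw [convMul_smul_left (if c = 0 then (-1:ℚ) else 0) (letterSub a) (subst w') _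
          (fun _ => rfl) s]
        rw [convMul_one_left, ← subst_cons]
        ring
      rw [convMul_add_left (fun s => (if c = a then (1:ℚ) else 0) * subst w' s)
        (fun s => (if c = 0 then (-1:ℚ) else 0) * subst (a :: w') s) invOnePlusE0 _ hg t]
      rw [convMul_smul_left (if c = a then (1:ℚ) else 0) (subst w') invOnePlusE0 _
        (fun _ => rfl) t]
      rw [convMul_smul_left (if c = 0 then (-1:ℚ) else 0) (subst (a :: w')) invOnePlusE0 _
        (fun _ => rfl) t]
      simp
      ring


/-- For every word `w`:
`(1+e₀)⁻¹ ⧢ w(e₀,e₁) = w((1+e₀)⁻¹e₀, (1+e₀)⁻¹e₁) · (1+e₀)⁻¹`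
in `ℚ⟨⟨e₀,e₁⟩⟩`. -/
theorem stmt_9 (w : List (Fin 2)) :
    shMul invOnePlusE0 (delta w) = convMul (subst w) invOnePlusE0 := by
  funext v
  exact main_pointwise v w
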